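/- For ε ∈ (0, π²/4), there exists a constant C such that for all λ in the strip ℝ + i(−ε, ε), |∑_{n≥0} Log(1 + iλ/(π²(n+1/2)²))| ≤ C(1 + |λ|^{1/2} · log(1 + |λ|)), where Log is the principal complex logarithm. -/

import Mathlib

open Complex Real

/-- Telescoping sum: `∑_{i} 1/((i+N)(i+N+1)) = 1/N`. -/
lemma aux_telescope (N : ℕ) (hN : 0 < N) :
    HasSum (fun i : ℕ => (1 : ℝ) / (((i : ℝ) + N) * ((i : ℝ) + N + 1))) (1 / N) := by
  have hNpos : (0 : ℝ) < (N : ℝ) := by exact_mod_cast hN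
  have hpos : ∀ i : ℕ, (0 : ℝ) < (i : ℝ) + N := by
    intro i; positivity
  have key : ∀ i : ℕ, (1 : ℝ) / (((i : ℝ) + N) * ((i : ℝ) + N + 1)) =
      1 / ((i : ℝ) + N) - 1 / ((i : ℝ) + N + 1) := by
    intro i
    have h1 : ((i : ℝ) + N) ≠ 0 := (hpos i).ne'
    have h2 : ((i : ℝ) + N + 1) ≠ 0 := by positivity
    field_simp
    all_goals ring
  have hsum : ∀ m : ℕ, ∑ i ∈ Finset.range m,
      (1 : ℝ) / (((i : ℝ) + N) * ((i : ℝ) + N + 1)) = 1 / N - 1 / ((m : ℝ) + N) := by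
    intro m
    induction m with
    | zero => simp
    | succ k ih =>
        rw [Finset.sum_range_succ, ih, key k]
        push_cast
        ring
  rw [hasSum_iff_tendsto_nat_of_nonneg]
  · simp only [hsum]
    have hmono : Filter.Tendsto (fun m : ℕ => (m : ℝ) + N) Filter.atTop Filter.atTop :=
      Filter.tendsto_atTop_add_const_right _ _ tendsto_natCast_atTop_atTop
    have h0 : Filter.Tendsto (fun m : ℕ => 1 / ((m : ℝ) + N)) Filter.atTop (nhds 0) := by
      simpa [one_div, Function.comp_def] using tendsto_inv_atTop_zero.comp hmono
    have := (tendsto_const_nhds (x := (1 : ℝ) / N)).sub h0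
    simpa using this
  · intro i
    have := hpos i
    positivity

/-- `|Log z| ≤ |log |z|| + π`. -/
lemma aux_norm_log_le (z : ℂ) :
    ‖Complex.log z‖ ≤ |Real.log (‖z‖)| + Real.pi := by
  rw [Complex.log]
  refine (norm_add_le _ _).trans ?_
  rw [Complex.norm_real, norm_mul, Complex.norm_I, mul_one, Complex.norm_real, Real.norm_eq_abs,
    Real.norm_eq_abs]
  exact add_le_add le_rfl (Complex.abs_arg_le_pi z)

/-- `√x ≤ 2 * (1 + √x * log(1+x))`. -/
lemma aux_sqrt_le (x : ℝ) (hx : 0 ≤ x) :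
    Real.sqrt x ≤ 2 * (1 + Real.sqrt x * Real.log (1 + x)) := by
  have hs0 : 0 ≤ Real.sqrt x := Real.sqrt_nonneg x
  have hL0 : 0 ≤ Real.log (1 + x) := Real.log_nonneg (by linarith)
  rcases le_or_gt x 3 with h | h
  · have h1 : Real.sqrt x ≤ Real.sqrt 4 := Real.sqrt_le_sqrt (by linarith)
    have h2 : Real.sqrt 4 = 2 := by
      rw [show (4 : ℝ) = 2 ^ 2 by norm_num, Real.sqrt_sq (by norm_num)]
    nlinarith [mul_nonneg hs0 hL0]
  · have h4 : (1 : ℝ) ≤ Real.log (1 + x) := by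
      have : Real.log 4 ≤ Real.log (1 + x) :=
        Real.log_le_log (by norm_num) (by linarith)
      have h42 : Real.log 4 = 2 * Real.log 2 := by
        rw [show (4 : ℝ) = 2 ^ 2 by norm_num, Real.log_pow]; push_cast; ring
      nlinarith [Real.log_two_gt_d9]
    nlinarith [mul_le_mul_of_nonneg_left h4 hs0]

/-- `log(1+x) ≤ 1 + √x * log(1+x)`. -/
lemma aux_log_le (x : ℝ) (hx : 0 ≤ x) :
    Real.log (1 + x) ≤ 1 + Real.sqrt x * Real.log (1 + x) := by
  have hL0 : 0 ≤ Real.log (1 + x) := Real.log_nonneg (by linarith)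
  rcases le_or_gt x 1 with h | h
  · have h1 : Real.log (1 + x) ≤ Real.log 2 := Real.log_le_log (by linarith) (by linarith)
    have hs0 : 0 ≤ Real.sqrt x := Real.sqrt_nonneg x
    nlinarith [Real.log_two_lt_d9, mul_nonneg hs0 hL0]
  · have hs1 : (1 : ℝ) ≤ Real.sqrt x := Real.one_le_sqrt.mpr h.le
    nlinarith [mul_le_mul_of_nonneg_right hs1 hL0]

set_option maxHeartbeats 1000000 in
theorem stmt_3 (ε : ℝ) (hε : 0 < ε) (hε' : ε < Real.pi ^ 2 / 4) :
    ∃ C : ℝ, ∀ l : ℂ, |l.im| < ε →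
      ‖(∑' n : ℕ,
          Complex.log (1 + Complex.I * l / ((Real.pi : ℂ) ^ 2 * ((n : ℂ) + 1 / 2) ^ 2)))‖
        ≤ C * (1 + Real.sqrt ‖l‖ * Real.log (1 + ‖l‖)) := by
  have hπ : (3 : ℝ) < Real.pi := Real.pi_gt_three
  have hπsq : (9 : ℝ) < Real.pi ^ 2 := by nlinarith
  have hπ2 : (0 : ℝ) < Real.pi ^ 2 := by positivity
  set δ : ℝ := 1 - 4 * ε / Real.pi ^ 2 with hδdef
  have hδ0 : 0 < δ := by
    rw [hδdef, sub_pos, div_lt_one hπ2]; linarith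
  have hδ1 : δ < 1 := by
    rw [hδdef]; have : 0 < 4 * ε / Real.pi ^ 2 := by positivity
    linarith
  set A : ℝ := Real.pi - Real.log δ with hAdef
  have hlogδ : Real.log δ ≤ 0 := Real.log_nonpos hδ0.le hδ1.le
  have hA3 : (3 : ℝ) ≤ A := by rw [hAdef]; linarith
  refine ⟨3 * A + 4, ?_⟩
  intro l him
  set s : ℝ := Real.sqrt ‖l‖ with hsdef
  set L : ℝ := Real.log (1 + ‖l‖) with hLdef
  have habs0 : (0 : ℝ) ≤ ‖l‖ := norm_nonneg l
  have hs0 : 0 ≤ s := Real.sqrt_nonneg _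
  have hL0 : 0 ≤ L := Real.log_nonneg (by linarith)
  have hs2 : s ^ 2 = ‖l‖ := Real.sq_sqrt habs0
  set r : ℕ → ℝ := fun n => Real.pi ^ 2 * ((n : ℝ) + 1 / 2) ^ 2 with hrdef
  set f : ℕ → ℂ :=
    fun n => Complex.log (1 + Complex.I * l / ((Real.pi : ℂ) ^ 2 * ((n : ℂ) + 1 / 2) ^ 2))
    with hfdef
  have hr_pos : ∀ n : ℕ, 0 < r n := by
    intro n; simp only [hrdef]
    have : (0 : ℝ) < (n : ℝ) + 1 / 2 := by positivity
    positivity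
  have hr_ge : ∀ n : ℕ, Real.pi ^ 2 / 4 ≤ r n := by
    intro n; simp only [hrdef]
    have h1 : ((1 : ℝ) / 2) ^ 2 ≤ ((n : ℝ) + 1 / 2) ^ 2 := by
      have : (0 : ℝ) ≤ (n : ℝ) := Nat.cast_nonneg n
      nlinarith
    nlinarith
  have hr1 : ∀ n : ℕ, 1 ≤ r n := by
    intro n; have := hr_ge n; nlinarith
  have hcast : ∀ n : ℕ, ((Real.pi : ℂ) ^ 2 * ((n : ℂ) + 1 / 2) ^ 2) = ((r n : ℝ) : ℂ) := by
    intro n; simp only [hrdef]; push_cast; ring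
  have habsw : ∀ n : ℕ,
      ‖Complex.I * l / ((Real.pi : ℂ) ^ 2 * ((n : ℂ) + 1 / 2) ^ 2)‖
        = ‖l‖ / r n := by
    intro n
    rw [hcast n, norm_div, norm_mul, Complex.norm_I, one_mul, Complex.norm_real, Real.norm_eq_abs,
      abs_of_pos (hr_pos n)]
  -- lower bound on |1 + w n|
  have hlb : ∀ n : ℕ,
      δ ≤ ‖1 + Complex.I * l / ((Real.pi : ℂ) ^ 2 * ((n : ℂ) + 1 / 2) ^ 2)‖ := by
    intro n
    refine le_trans ?_ (Complex.re_le_norm _)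
    rw [hcast n, Complex.add_re, Complex.one_re, Complex.div_ofReal_re]
    have hre : (Complex.I * l).re = -l.im := by simp [Complex.mul_re]
    rw [hre]
    have hrp := hr_pos n
    have h1 : -ε / r n ≤ -l.im / r n := by
      have h2 : -ε ≤ -l.im := by linarith [(abs_le.mp him.le).2]
      gcongr
    have h2 : ε / r n ≤ 4 * ε / Real.pi ^ 2 := by
      rw [div_le_div_iff₀ (hr_pos n) hπ2]
      have := hr_ge n
      nlinarith
    have h3 : -ε / r n = -(ε / r n) := neg_div _ _
    rw [hδdef]; linarith
  -- upper bound on |1 + w n|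
  have hub : ∀ n : ℕ,
      ‖1 + Complex.I * l / ((Real.pi : ℂ) ^ 2 * ((n : ℂ) + 1 / 2) ^ 2)‖
        ≤ 1 + ‖l‖ := by
    intro n
    refine (norm_add_le _ _).trans ?_
    rw [norm_one, habsw n]
    have h1 : ‖l‖ / r n ≤ ‖l‖ / 1 := by
      apply div_le_div_of_nonneg_left habs0 one_pos (hr1 n)
    simp only [div_one] at h1
    linarith
  -- bound 1 : every term
  have hbound1 : ∀ n : ℕ, ‖f n‖ ≤ A + L := by
    intro n
    simp only [hfdef]
    refine (aux_norm_log_le _).trans ?_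
    have hxlb := hlb n
    have hxub := hub n
    set x := ‖1 + Complex.I * l / ((Real.pi : ℂ) ^ 2 * ((n : ℂ) + 1 / 2) ^ 2)‖
    have h1 : Real.log x ≤ L := by
      rw [hLdef]; exact Real.log_le_log (lt_of_lt_of_le hδ0 hxlb) hxub
    have h2 : Real.log δ ≤ Real.log x := Real.log_le_log hδ0 hxlb
    have h3 : |Real.log x| ≤ -Real.log δ + L := by
      rw [abs_le]; constructor <;> [linarith; linarith]
    rw [hAdef]; linarith
  -- bound 2 : far terms
  have hbound2 : ∀ n : ℕ, ‖l‖ ≤ ((n : ℝ) + 1 / 2) ^ 2 →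
      ‖f n‖ ≤ 2 * (‖l‖ / r n) := by
    intro n hn
    simp only [hfdef]
    have hw : ‖Complex.I * l / ((Real.pi : ℂ) ^ 2 * ((n : ℂ) + 1 / 2) ^ 2)‖
        ≤ 1 / 2 := by
      rw [habsw n, div_le_iff₀ (hr_pos n)]
      have hrq := hr_pos n
      simp only [hrdef] at *
      nlinarith [hn, sq_nonneg ((n : ℝ) + 1 / 2)]
    have h5 := Complex.norm_log_one_add_half_le_self (z :=
      Complex.I * l / ((Real.pi : ℂ) ^ 2 * ((n : ℂ) + 1 / 2) ^ 2)) (by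
        exact hw)
    rw [habsw n] at h5
    refine h5.trans ?_
    have : (0 : ℝ) ≤ ‖l‖ / r n := by positivity
    linarith
  -- the cut point
  set N : ℕ := ⌊s⌋₊ + 1 with hNdef
  have hN0 : 0 < N := Nat.succ_pos _
  have hsN : s < N := by
    rw [hNdef]; push_cast; exact Nat.lt_floor_add_one s
  have hNs : (N : ℝ) ≤ s + 1 := by
    rw [hNdef]; push_cast
    have := Nat.floor_le hs0
    linarith
  have hN1 : (1 : ℝ) ≤ (N : ℝ) := by exact_mod_cast hN0
  have hfar : ∀ n : ℕ, N ≤ n → ‖l‖ ≤ ((n : ℝ) + 1 / 2) ^ 2 := by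
    intro n hn
    have h1 : s ≤ (n : ℝ) := le_trans hsN.le (by exact_mod_cast hn)
    have h2 : s ^ 2 ≤ ((n : ℝ) + 1 / 2) ^ 2 := by nlinarith
    rw [hs2] at h2; exact h2
  -- summability of the tail comparison
  have hT : HasSum (fun i : ℕ => (1 : ℝ) / (((i : ℝ) + N) * ((i : ℝ) + N + 1)))
      ((1 : ℝ) / N) := aux_telescope N hN0
  have hcomp : ∀ i : ℕ, ‖f (i + N)‖ ≤
      (2 * ‖l‖ / Real.pi ^ 2) * (1 / (((i : ℝ) + N) * ((i : ℝ) + N + 1))) := by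
    intro i
    have h1 : ‖f (i + N)‖ ≤ 2 * (‖l‖ / r (i + N)) :=
      hbound2 (i + N) (hfar (i + N) (Nat.le_add_left N i))
    refine h1.trans ?_
    have hx : (0 : ℝ) < ((i : ℝ) + N) := by positivity
    have hxx : (0 : ℝ) < ((i : ℝ) + N) * ((i : ℝ) + N + 1) := by positivity
    have hrge : Real.pi ^ 2 * (((i : ℝ) + N) * ((i : ℝ) + N + 1)) ≤ r (i + N) := by
      simp only [hrdef]
      have h2 : ((i : ℝ) + N) * ((i : ℝ) + N + 1) ≤ (((i + N : ℕ) : ℝ) + 1 / 2) ^ 2 := by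
        push_cast; nlinarith
      nlinarith
    have hrp := hr_pos (i + N)
    have h3 : ‖l‖ / r (i + N) ≤
        ‖l‖ / (Real.pi ^ 2 * (((i : ℝ) + N) * ((i : ℝ) + N + 1))) := by
      apply div_le_div_of_nonneg_left habs0 _ hrge
      positivity
    calc 2 * (‖l‖ / r (i + N))
        ≤ 2 * (‖l‖ / (Real.pi ^ 2 * (((i : ℝ) + N) * ((i : ℝ) + N + 1)))) := by
          linarith
      _ = (2 * ‖l‖ / Real.pi ^ 2) * (1 / (((i : ℝ) + N) * ((i : ℝ) + N + 1))) := by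
          field_simp
  have hTsummable : Summable (fun i : ℕ =>
      (2 * ‖l‖ / Real.pi ^ 2) * (1 / (((i : ℝ) + N) * ((i : ℝ) + N + 1)))) :=
    hT.summable.mul_left _
  have hsum_tail : Summable (fun i : ℕ => ‖f (i + N)‖) :=
    Summable.of_nonneg_of_le (fun i => norm_nonneg _) hcomp hTsummable
  have hsumg : Summable (fun n : ℕ => ‖f n‖) :=
    (summable_nat_add_iff N).mp hsum_tail
  have hsumnorm : Summable (fun n : ℕ => ‖f n‖) := by
    exact hsumg
  have hmain : ‖∑' n : ℕ, f n‖ ≤ ∑' n : ℕ, ‖f n‖ := by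
    have := norm_tsum_le_tsum_norm hsumnorm
    exact this
  have hsplit : ∑' n : ℕ, ‖f n‖
      = ∑ i ∈ Finset.range N, ‖f i‖ + ∑' i : ℕ, ‖f (i + N)‖ :=
    (Summable.sum_add_tsum_nat_add N hsumg).symm
  have hpart1 : ∑ i ∈ Finset.range N, ‖f i‖ ≤ (N : ℝ) * (A + L) := by
    calc ∑ i ∈ Finset.range N, ‖f i‖
        ≤ ∑ _i ∈ Finset.range N, (A + L) := Finset.sum_le_sum fun i _ => hbound1 i
      _ = (N : ℝ) * (A + L) := by rw [Finset.sum_const, Finset.card_range, nsmul_eq_mul]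
  have hpart2 : ∑' i : ℕ, ‖f (i + N)‖
      ≤ (2 * ‖l‖ / Real.pi ^ 2) * (1 / N) := by
    calc ∑' i : ℕ, ‖f (i + N)‖
        ≤ ∑' i : ℕ, (2 * ‖l‖ / Real.pi ^ 2) *
            (1 / (((i : ℝ) + N) * ((i : ℝ) + N + 1))) :=
          Summable.tsum_le_tsum hcomp hsum_tail hTsummable
      _ = (2 * ‖l‖ / Real.pi ^ 2) * (1 / N) := by
          rw [tsum_mul_left, hT.tsum_eq]
  have hpart2' : (2 * ‖l‖ / Real.pi ^ 2) * (1 / N) ≤ s := by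
    have hl : ‖l‖ ≤ s * (N : ℝ) := by
      rw [← hs2]; nlinarith
    rw [mul_one_div, div_div, div_le_iff₀ (by positivity)]
    nlinarith [mul_nonneg hs0 (by linarith : (0 : ℝ) ≤ (N : ℝ))]
  have hfact1 : s ≤ 2 * (1 + s * L) := by
    rw [hsdef, hLdef]; exact aux_sqrt_le _ habs0
  have hfact2 : L ≤ 1 + s * L := by
    rw [hsdef, hLdef]; exact aux_log_le _ habs0
  have hA0 : (0 : ℝ) ≤ A := by linarith
  calc ‖∑' n : ℕ, f n‖
      ≤ ∑' n : ℕ, ‖f n‖ := hmain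
    _ = ∑ i ∈ Finset.range N, ‖f i‖ + ∑' i : ℕ, ‖f (i + N)‖ := hsplit
    _ ≤ (N : ℝ) * (A + L) + s := by linarith [hpart2.trans hpart2']
    _ ≤ (s + 1) * (A + L) + s := by
        nlinarith [mul_le_mul_of_nonneg_right hNs (by linarith : (0 : ℝ) ≤ A + L)]
    _ ≤ (3 * A + 4) * (1 + s * L) := by
        nlinarith [mul_le_mul_of_nonneg_right hfact1 hA0, mul_nonneg hs0 hL0,
          mul_nonneg hA0 (mul_nonneg hs0 hL0)]
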